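/- Let H be a separable Hilbert space and (ψᵢ)_{i∈ℕ} a family of vectors in H. Suppose there is a subset S of H whose linear span is dense such that: (a) for every f ∈ S, the sequence (⟨f,ψᵢ⟩)ᵢ lies in ℓ²(ℕ); and (b) for all f, g ∈ S, ∑ᵢ ⟨f,ψᵢ⟩⟨ψᵢ,g⟩ = ⟨f,g⟩. Then (ψᵢ)ᵢ is a Parseval frame for H, i.e. ∑ᵢ |⟨f,ψᵢ⟩|² = ‖f‖² for every f ∈ H. -/

import Mathlib

open MeasureTheory Set

local notation "⟪" x ", " y "⟫" => @inner ℂ _ _ x y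

/-- If there is a total subset `S` of a separable Hilbert space `H` such that
`(⟨f,ψᵢ⟩)ᵢ ∈ ℓ²` for `f ∈ S` and `∑ᵢ ⟨f,ψᵢ⟩⟨ψᵢ,g⟩ = ⟨f,g⟩` for `f,g ∈ S`, then
`(ψᵢ)` is a Parseval frame for `H`. -/
theorem stmt_6 {H : Type*} [NormedAddCommGroup H] [InnerProductSpace ℂ H]
    [CompleteSpace H] [TopologicalSpace.SeparableSpace H]
    (ψ : ℕ → H) (S : Set H)
    (htotal : Dense ((Submodule.span ℂ S : Submodule ℂ H) : Set H))
    (ha : ∀ f ∈ S, Summable fun i => ‖⟪f, ψ i⟫‖ ^ 2)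
    (hb : ∀ f ∈ S, ∀ g ∈ S, HasSum (fun i => ⟪f, ψ i⟫ * ⟪ψ i, g⟫) ⟪f, g⟫) :
    ∀ f : H, HasSum (fun i => ‖⟪f, ψ i⟫‖ ^ 2) (‖f‖ ^ 2) := by
  set M : Submodule ℂ H := Submodule.span ℂ S with hM
  -- real power with exponent `(2 : ℝ≥0∞).toReal` is just squaring
  have hrp : ∀ z : ℝ, z ^ ((2 : ENNReal).toReal) = z ^ (2 : ℕ) := fun z => by
    rw [ENNReal.toReal_ofNat, show ((2 : ℝ)) = ((2 : ℕ) : ℝ) by norm_num, Real.rpow_natCast]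
  -- membership in ℓ² for elements of the span
  have hmem : ∀ f ∈ M, Memℓp (fun i => ⟪ψ i, f⟫) 2 := by
    intro f hf
    induction hf using Submodule.span_induction with
    | mem x hx =>
      apply memℓp_gen
      have h1 : Summable fun i => ‖⟪ψ i, x⟫‖ ^ (2 : ℕ) := by
        simpa [norm_inner_symm] using ha x hx
      simpa [hrp] using h1
    | zero => simpa [Pi.zero_def] using zero_memℓp (p := 2) (E := fun _ : ℕ => ℂ)
    | add x y hx' hy' hx hy =>
      have := hx.add hy
      simpa [inner_add_right, Pi.add_def] using this
    | smul c x hx' hx =>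
      have := hx.const_smul c
      simpa [inner_smul_right, Pi.smul_def, smul_eq_mul] using this
  -- the two-variable sum formula extends to the span
  have step1 : ∀ f ∈ S, ∀ g ∈ M, HasSum (fun i => ⟪f, ψ i⟫ * ⟪ψ i, g⟫) ⟪f, g⟫ := by
    intro f hf g hg
    induction hg using Submodule.span_induction with
    | mem x hx => exact hb f hf x hx
    | zero => simpa using hasSum_zero
    | add x y hx' hy' hx hy => simpa [inner_add_right, mul_add] using hx.add hy
    | smul c x hx' hx =>
      have := hx.mul_left c
      simpa [inner_smul_right, mul_left_comm, mul_comm, mul_assoc] using this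
  have step2 : ∀ f ∈ M, ∀ g ∈ M, HasSum (fun i => ⟪f, ψ i⟫ * ⟪ψ i, g⟫) ⟪f, g⟫ := by
    intro f hf g hg
    induction hf using Submodule.span_induction with
    | mem x hx => exact step1 x hx g hg
    | zero => simpa using hasSum_zero
    | add x y hx' hy' hx hy => simpa [inner_add_left, add_mul] using hx.add hy
    | smul c x hx' hx =>
      have := hx.mul_left (starRingEnd ℂ c)
      simpa [inner_smul_left, mul_assoc, mul_left_comm, mul_comm] using this
  -- Parseval on the span
  have hMparseval : ∀ f ∈ M, HasSum (fun i => ‖⟪f, ψ i⟫‖ ^ 2) (‖f‖ ^ 2) := by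
    intro f hf
    have h := step2 f hf f hf
    have h1 : ∀ i, ⟪f, ψ i⟫ * ⟪ψ i, f⟫ = ((‖⟪f, ψ i⟫‖ ^ 2 : ℝ) : ℂ) := by
      intro i
      calc ⟪f, ψ i⟫ * ⟪ψ i, f⟫
          = ⟪f, ψ i⟫ * (starRingEnd ℂ) ⟪f, ψ i⟫ := by rw [inner_conj_symm]
        _ = ((‖⟪f, ψ i⟫‖ ^ 2 : ℝ) : ℂ) := by rw [RCLike.mul_conj]; norm_cast
    have h2 : ⟪f, f⟫ = ((‖f‖ ^ 2 : ℝ) : ℂ) := by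
      simpa using inner_self_eq_norm_sq_to_K (𝕜 := ℂ) f
    rw [funext h1, h2, Complex.hasSum_ofReal] at h
    exact h
  -- the analysis operator on the span, as a linear map into ℓ²
  let V : M →ₗ[ℂ] lp (fun _ : ℕ => ℂ) 2 :=
    { toFun := fun f => ⟨fun i => ⟪ψ i, (f : H)⟫, hmem f f.2⟩
      map_add' := by
        intro f g
        ext i
        simp [inner_add_right, lp.coeFn_add]; rfl
      map_smul' := by
        intro c f
        ext i
        simp [inner_smul_right, lp.coeFn_smul] }
  have hVapply : ∀ (f : M) (i : ℕ), (V f : ∀ _ : ℕ, ℂ) i = ⟪ψ i, (f : H)⟫ := fun _ _ => rfl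
  -- V is isometric
  have hVnorm : ∀ f : M, ‖V f‖ = ‖(f : H)‖ := by
    intro f
    have hs := lp.hasSum_norm (p := 2) (by norm_num) (V f)
    have hs' : HasSum (fun i => ‖(V f : ∀ _ : ℕ, ℂ) i‖ ^ ((2 : ENNReal).toReal))
        (‖(f : H)‖ ^ (2 : ℕ)) := by
      have hpars := hMparseval (f : H) f.2
      have heq : ∀ i, ‖(V f : ∀ _ : ℕ, ℂ) i‖ ^ ((2 : ENNReal).toReal)
          = ‖⟪(f : H), ψ i⟫‖ ^ (2 : ℕ) := by
        intro i
        rw [hVapply, norm_inner_symm, hrp]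
      rw [funext heq]
      exact hpars
    have h2 : ‖V f‖ ^ (2 : ℕ) = ‖(f : H)‖ ^ (2 : ℕ) := by
      have := hs.unique hs'
      rwa [hrp] at this
    exact (sq_eq_sq₀ (norm_nonneg _) (norm_nonneg _)).mp h2
  -- make V continuous and extend it to all of H
  let Vc : M →L[ℂ] lp (fun _ : ℕ => ℂ) 2 :=
    V.mkContinuous 1 (fun f => by rw [one_mul, hVnorm f]; rfl)
  have hVcapply : ∀ f : M, Vc f = V f := fun _ => rfl
  let e : M →L[ℂ] H := M.subtypeL
  have hde : DenseRange e := by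
    have : Set.range (e : M → H) = (M : Set H) := Subtype.range_coe
    rw [DenseRange, this]
    exact htotal
  have hue : IsUniformInducing (e : M → H) :=
    isUniformEmbedding_subtype_val.isUniformInducing
  let g : H →L[ℂ] lp (fun _ : ℕ => ℂ) 2 := Vc.extend e
  have hge : ∀ f : M, g (f : H) = Vc f := fun f =>
    ContinuousLinearMap.extend_eq Vc hde hue f
  -- the extension is isometric
  have hgnorm : ∀ f : H, ‖g f‖ = ‖f‖ := by
    have hclosed : IsClosed {f : H | ‖g f‖ = ‖f‖} :=
      isClosed_eq (continuous_norm.comp g.continuous) continuous_norm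
    intro f
    refine hde.induction_on f hclosed fun x => ?_
    show ‖g (x : H)‖ = ‖(x : H)‖
    rw [hge x, hVcapply x]
    exact hVnorm x
  -- the extension is still given by inner products with ψ
  have hcoord : ∀ (i : ℕ) (f : H), (g f : ∀ _ : ℕ, ℂ) i = ⟪ψ i, f⟫ := by
    intro i
    have hcont : Continuous (fun x : lp (fun _ : ℕ => ℂ) 2 => (x : ∀ _ : ℕ, ℂ) i) := by
      have hlip : LipschitzWith 1 (fun x : lp (fun _ : ℕ => ℂ) 2 => (x : ∀ _ : ℕ, ℂ) i) := by
        apply LipschitzWith.of_dist_le_mul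
        intro x y
        have := lp.norm_apply_le_norm (E := fun _ : ℕ => ℂ) (p := 2) (by norm_num) (x - y) i
        simpa [dist_eq_norm, lp.coeFn_sub] using this
      exact hlip.continuous
    have hclosed : IsClosed {f : H | (g f : ∀ _ : ℕ, ℂ) i = ⟪ψ i, f⟫} :=
      isClosed_eq (hcont.comp g.continuous) (innerSL ℂ (ψ i)).continuous
    intro f
    refine hde.induction_on f hclosed fun x => ?_
    show (g (x : H) : ∀ _ : ℕ, ℂ) i = ⟪ψ i, (x : H)⟫
    rw [hge x, hVcapply x]
    exact hVapply x i
  -- conclude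
  intro f
  have hs := lp.hasSum_norm (p := 2) (by norm_num) (g f)
  have hfin : HasSum (fun i => ‖⟪f, ψ i⟫‖ ^ (2 : ℕ)) (‖f‖ ^ (2 : ℕ)) := by
    have heq : ∀ i, ‖(g f : ∀ _ : ℕ, ℂ) i‖ ^ ((2 : ENNReal).toReal) = ‖⟪f, ψ i⟫‖ ^ (2 : ℕ) := by
      intro i
      rw [hcoord i f, ← norm_inner_symm, hrp]
    have heq2 : ‖g f‖ ^ ((2 : ENNReal).toReal) = ‖f‖ ^ (2 : ℕ) := by
      rw [hgnorm f, hrp]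
    rw [funext heq, heq2] at hs
    exact hs
  simpa using hfin
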